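/- arXiv:1501.00061 — 3 statements merged into one kernel-verified Lean document; each statement's English description precedes it below -/
import Mathlib

section
/- For n ≥ 3, the number of independent sets (including the empty set) in the cycle graph on n vertices equals the n-th Lucas number, where L_0 = 2 and L_1 = 1. -/
open Classical in
/-- Number of independent sets (including the empty set) of a finite graph. -/
noncomputable def numIndepSets {V : Type*} [Fintype V] (G : SimpleGraph V) : ℕ :=
  (Finset.univ.powerset.filter fun s : Finset V =>
    ∀ v ∈ s, ∀ w ∈ s, ¬ G.Adj v w).card

open Classical in
/-- Number of independent sets of size exactly `t`. -/
noncomputable def numIndepSetsOfSize {V : Type*} [Fintype V] (G : SimpleGraph V) (t : ℕ) : ℕ :=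
  (Finset.univ.powerset.filter fun s : Finset V =>
    (∀ v ∈ s, ∀ w ∈ s, ¬ G.Adj v w) ∧ s.card = t).card

/-- The Lucas numbers: `L 0 = 2`, `L 1 = 1`, `L (n+2) = L (n+1) + L n`. -/
def lucasNum : ℕ → ℕ
  | 0 => 2
  | 1 => 1
  | n + 2 => lucasNum (n + 1) + lucasNum n


namespace CycleAux

open List Finset

/-- Relation: not both true. -/
def R (a b : Bool) : Prop := ¬(a = true ∧ b = true)

instance : DecidableRel R := fun _ _ => by unfold R; infer_instance

def good (l : List Bool) : Prop := l.Chain' R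

instance : DecidablePred good := fun _ => by unfold good List.Chain'; infer_instance

/-- All boolean lists of length `n`, as a Finset. -/
def allLists (n : ℕ) : Finset (List Bool) :=
  (Finset.univ : Finset (Fin n → Bool)).image List.ofFn

lemma mem_allLists {n : ℕ} {l : List Bool} : l ∈ allLists n ↔ l.length = n := by
  constructor
  · rintro h
    rw [allLists, Finset.mem_image] at h
    obtain ⟨f, -, rfl⟩ := h
    simp
  · rintro rfl
    rw [allLists, Finset.mem_image]
    exact ⟨l.get, Finset.mem_univ _, List.ofFn_get l⟩

def glist (n : ℕ) : Finset (List Bool) := (allLists n).filter good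

lemma mem_glist {n : ℕ} {l : List Bool} : l ∈ glist n ↔ l.length = n ∧ good l := by
  rw [glist, Finset.mem_filter, mem_allLists]

lemma good_cons {b : Bool} {l : List Bool} :
    good (b :: l) ↔ (∀ y ∈ l.head?, R b y) ∧ good l := List.isChain_cons

lemma good_false_cons {l : List Bool} : good (false :: l) ↔ good l := by
  rw [good_cons]
  simp [R]

lemma good_true_cons {l : List Bool} :
    good (true :: l) ↔ l.head? ≠ some true ∧ good l := by
  rw [good_cons]
  constructor
  · rintro ⟨h1, h2⟩
    refine ⟨?_, h2⟩
    intro hh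
    exact h1 true hh ⟨rfl, rfl⟩
  · rintro ⟨h1, h2⟩
    refine ⟨?_, h2⟩
    rintro y hy ⟨-, rfl⟩
    exact h1 hy

def hf (n : ℕ) : Finset (List Bool) := (glist n).filter (fun l => l.head? ≠ some true)
def lf (n : ℕ) : Finset (List Bool) := (glist n).filter (fun l => l.getLast? ≠ some true)
def hlf (n : ℕ) : Finset (List Bool) :=
  (glist n).filter (fun l => l.head? ≠ some true ∧ l.getLast? ≠ some true)

lemma glist_succ (n : ℕ) :
    glist (n + 1) = ((glist n).image (false :: ·)) ∪ ((hf n).image (true :: ·)) := by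
  ext l
  rw [Finset.mem_union, Finset.mem_image, Finset.mem_image]
  constructor
  · intro hl
    rw [mem_glist] at hl
    obtain ⟨hlen, hg⟩ := hl
    match l with
    | [] => simp at hlen
    | false :: t =>
      left
      exact ⟨t, mem_glist.2 ⟨by simpa using hlen, good_false_cons.1 hg⟩, rfl⟩
    | true :: t =>
      right
      rw [good_true_cons] at hg
      exact ⟨t, Finset.mem_filter.2 ⟨mem_glist.2 ⟨by simpa using hlen, hg.2⟩, hg.1⟩, rfl⟩
  · rintro (⟨t, ht, rfl⟩ | ⟨t, ht, rfl⟩)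
    · rw [mem_glist] at ht
      exact mem_glist.2 ⟨by simp [ht.1], good_false_cons.2 ht.2⟩
    · rw [hf, Finset.mem_filter, mem_glist] at ht
      exact mem_glist.2 ⟨by simp [ht.1.1], good_true_cons.2 ⟨ht.2, ht.1.2⟩⟩

lemma hf_succ (n : ℕ) : hf (n + 1) = (glist n).image (false :: ·) := by
  ext l
  rw [hf, Finset.mem_filter, Finset.mem_image]
  constructor
  · rintro ⟨hl, hh⟩
    rw [mem_glist] at hl
    obtain ⟨hlen, hg⟩ := hl
    match l with
    | [] => simp at hlen
    | true :: t => simp at hh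
    | false :: t =>
      exact ⟨t, mem_glist.2 ⟨by simpa using hlen, good_false_cons.1 hg⟩, rfl⟩
  · rintro ⟨t, ht, rfl⟩
    rw [mem_glist] at ht
    exact ⟨mem_glist.2 ⟨by simp [ht.1], good_false_cons.2 ht.2⟩, by simp⟩

lemma good_reverse {l : List Bool} : good l.reverse ↔ good l := by
  show List.IsChain R l.reverse ↔ List.IsChain R l
  rw [List.isChain_reverse]
  constructor <;> exact fun h => h.imp (fun a b hab => by unfold R at *; tauto)

lemma lf_eq_image : ∀ n, lf n = (hf n).image List.reverse := by
  intro n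
  ext l
  rw [Finset.mem_image]
  constructor
  · intro hl
    rw [lf, Finset.mem_filter, mem_glist] at hl
    refine ⟨l.reverse, ?_, List.reverse_reverse l⟩
    rw [hf, Finset.mem_filter, mem_glist]
    refine ⟨⟨by simp [hl.1.1], good_reverse.2 hl.1.2⟩, ?_⟩
    rw [List.head?_reverse]
    exact hl.2
  · rintro ⟨t, ht, rfl⟩
    rw [hf, Finset.mem_filter, mem_glist] at ht
    rw [lf, Finset.mem_filter, mem_glist]
    refine ⟨⟨by simp [ht.1.1], good_reverse.1 (by simpa using ht.1.2)⟩, ?_⟩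
    rw [List.getLast?_reverse]
    exact ht.2

lemma card_lf (n : ℕ) : (lf n).card = (hf n).card := by
  rw [lf_eq_image]
  exact Finset.card_image_of_injective _ List.reverse_injective

lemma getLast?_cons_of_ne_nil {b : Bool} {t : List Bool} (ht : t ≠ []) :
    (b :: t).getLast? = t.getLast? := by
  match t with
  | [] => exact absurd rfl ht
  | a :: s => exact List.getLast?_cons_cons

lemma hlf_succ (n : ℕ) : hlf (n + 2) = (lf (n + 1)).image (false :: ·) := by
  ext l
  rw [hlf, Finset.mem_filter, Finset.mem_image]
  constructor
  · rintro ⟨hl, hh, hlast⟩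
    rw [mem_glist] at hl
    obtain ⟨hlen, hg⟩ := hl
    match l with
    | [] => simp at hlen
    | true :: t => simp at hh
    | false :: t =>
      have htne : t ≠ [] := by
        intro h; rw [h] at hlen; simp at hlen
      refine ⟨t, ?_, rfl⟩
      rw [lf, Finset.mem_filter, mem_glist]
      exact ⟨⟨by simpa using hlen, good_false_cons.1 hg⟩,
        by rwa [getLast?_cons_of_ne_nil htne] at hlast⟩
  · rintro ⟨t, ht, rfl⟩
    rw [lf, Finset.mem_filter, mem_glist] at ht
    have htne : t ≠ [] := by
      intro h; rw [h] at ht; simp at ht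
    refine ⟨mem_glist.2 ⟨by simp [ht.1.1], good_false_cons.2 ht.1.2⟩, by simp,
      by rw [getLast?_cons_of_ne_nil htne]; exact ht.2⟩

/-- Good cyclic lists: good and not (first and last both true). -/
def clist (n : ℕ) : Finset (List Bool) :=
  (glist n).filter (fun l => ¬(l.head? = some true ∧ l.getLast? = some true))

lemma clist_succ (n : ℕ) :
    clist (n + 2) = ((glist (n + 1)).image (false :: ·)) ∪ ((hlf (n + 1)).image (true :: ·)) := by
  ext l
  rw [clist, Finset.mem_filter, Finset.mem_union, Finset.mem_image, Finset.mem_image]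
  constructor
  · rintro ⟨hl, hcyc⟩
    rw [mem_glist] at hl
    obtain ⟨hlen, hg⟩ := hl
    match l with
    | [] => simp at hlen
    | false :: t =>
      left
      exact ⟨t, mem_glist.2 ⟨by simpa using hlen, good_false_cons.1 hg⟩, rfl⟩
    | true :: t =>
      right
      have htne : t ≠ [] := by
        intro h; rw [h] at hlen; simp at hlen
      rw [good_true_cons] at hg
      refine ⟨t, ?_, rfl⟩
      rw [hlf, Finset.mem_filter, mem_glist]
      refine ⟨⟨by simpa using hlen, hg.2⟩, hg.1, ?_⟩
      intro h
      exact hcyc ⟨rfl, by rwa [getLast?_cons_of_ne_nil htne]⟩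
  · rintro (⟨t, ht, rfl⟩ | ⟨t, ht, rfl⟩)
    · rw [mem_glist] at ht
      exact ⟨mem_glist.2 ⟨by simp [ht.1], good_false_cons.2 ht.2⟩, by simp⟩
    · rw [hlf, Finset.mem_filter, mem_glist] at ht
      obtain ⟨⟨hlen, hg⟩, hh, hlast⟩ := ht
      have htne : t ≠ [] := by
        intro h; rw [h] at hlen; simp at hlen
      refine ⟨mem_glist.2 ⟨by simp [hlen], good_true_cons.2 ⟨hh, hg⟩⟩, ?_⟩
      rintro ⟨-, h2⟩
      rw [getLast?_cons_of_ne_nil htne] at h2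
      exact hlast h2

lemma disj_images (s t : Finset (List Bool)) :
    Disjoint (s.image (false :: ·)) (t.image (true :: ·)) := by
  rw [Finset.disjoint_left]
  rintro l hl hl'
  rw [Finset.mem_image] at hl hl'
  obtain ⟨a, -, rfl⟩ := hl
  obtain ⟨b, -, hb⟩ := hl'
  simp at hb

lemma glist_zero : glist 0 = {[]} := by
  ext l
  rw [mem_glist]
  constructor
  · rintro ⟨hlen, -⟩
    simp [List.length_eq_zero_iff.1 hlen]
  · rintro h
    rw [Finset.mem_singleton] at h
    subst h
    exact ⟨rfl, List.isChain_nil⟩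

lemma hf_zero : hf 0 = {[]} := by
  rw [hf, glist_zero]
  ext l
  simp only [Finset.mem_filter, Finset.mem_singleton]
  constructor
  · tauto
  · rintro rfl; simp

lemma card_glist_succ (n : ℕ) : (glist (n + 1)).card = (glist n).card + (hf n).card := by
  rw [glist_succ, Finset.card_union_of_disjoint (disj_images _ _),
    Finset.card_image_of_injective _ (List.cons_injective),
    Finset.card_image_of_injective _ (List.cons_injective)]

lemma card_hf_succ (n : ℕ) : (hf (n + 1)).card = (glist n).card := by
  rw [hf_succ, Finset.card_image_of_injective _ (List.cons_injective)]

lemma card_glist (n : ℕ) : (glist n).card = Nat.fib (n + 2) := by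
  induction n using Nat.strong_induction_on with
  | _ n ih =>
    match n with
    | 0 => rw [glist_zero]; simp
    | 1 =>
      rw [card_glist_succ, glist_zero, hf_zero]
      decide
    | (k + 2) =>
      rw [card_glist_succ, card_hf_succ, ih (k + 1) (by omega), ih k (by omega),
        Nat.fib_add_two (n := k + 2)]
      simp only [show k + 1 + 2 = k + 3 from rfl, show k + 2 + 2 = k + 4 from rfl,
        show k + 2 + 1 = k + 3 from rfl]
      omega

lemma card_hlf (n : ℕ) : (hlf (n + 2)).card = Nat.fib (n + 2) := by
  rw [hlf_succ, Finset.card_image_of_injective _ (List.cons_injective), card_lf,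
    card_hf_succ, card_glist]

lemma card_clist (n : ℕ) : (clist (n + 3)).card = Nat.fib (n + 4) + Nat.fib (n + 2) := by
  rw [clist_succ, Finset.card_union_of_disjoint (disj_images _ _),
    Finset.card_image_of_injective _ (List.cons_injective),
    Finset.card_image_of_injective _ (List.cons_injective),
    card_glist, card_hlf]

end CycleAux

section Main
open CycleAux


lemma indep_cond_iff (m : ℕ) (S : Finset (Fin (m + 3))) :
    (∀ v ∈ S, ∀ w ∈ S, ¬ (SimpleGraph.cycleGraph (m + 3)).Adj v w) ↔
      ∀ v : Fin (m + 3), ¬(v ∈ S ∧ v + 1 ∈ S) := by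
  have hone : (1 : Fin (m + 3)).val = 1 := Fin.val_one (m + 1)
  constructor
  · rintro h v ⟨hv, hv1⟩
    refine h v hv (v + 1) hv1 ?_
    rw [SimpleGraph.cycleGraph_adj']
    right
    rw [add_sub_cancel_left]
    exact hone
  · intro h v hv w hw hadj
    rw [SimpleGraph.cycleGraph_adj'] at hadj
    rcases hadj with h1 | h1
    · have hvw : v = w + 1 := by
        have : v - w = 1 := Fin.ext (h1.trans hone.symm)
        rw [sub_eq_iff_eq_add] at this
        rw [this]; exact add_comm _ _
      exact h w ⟨hw, hvw ▸ hv⟩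
    · have hwv : w = v + 1 := by
        have : w - v = 1 := Fin.ext (h1.trans hone.symm)
        rw [sub_eq_iff_eq_add] at this
        rw [this]; exact add_comm _ _
      exact h v ⟨hv, hwv ▸ hw⟩

lemma fin_succ_eq (m : ℕ) (v : Fin (m + 3)) (h : v.val + 1 < m + 3) :
    v + 1 = ⟨v.val + 1, h⟩ := by
  apply Fin.ext
  rw [Fin.add_def, Fin.val_one (m + 1)]
  exact Nat.mod_eq_of_lt h

lemma fin_last_succ (m : ℕ) : (⟨m + 2, by omega⟩ : Fin (m + 3)) + 1 = 0 := by
  apply Fin.ext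
  rw [Fin.add_def, Fin.val_one (m + 1)]
  simp


lemma lucas_fib : ∀ n, lucasNum (n + 1) = Nat.fib n + Nat.fib (n + 2) := by
  have key : ∀ n, lucasNum (n + 1) = Nat.fib n + Nat.fib (n + 2) ∧
      lucasNum (n + 2) = Nat.fib (n + 1) + Nat.fib (n + 3) := by
    intro n
    induction n with
    | zero => exact ⟨by decide, by decide⟩
    | succ k ih =>
      refine ⟨ih.2, ?_⟩
      show lucasNum (k + 3) = _
      have hrec : lucasNum (k + 3) = lucasNum (k + 2) + lucasNum (k + 1) := rfl
      rw [hrec, ih.1, ih.2, show k + 1 + 3 = k + 4 from rfl,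
        show Nat.fib (k + 4) = Nat.fib (k + 2) + Nat.fib (k + 3) from Nat.fib_add_two,
        show Nat.fib (k + 2) = Nat.fib k + Nat.fib (k + 1) from Nat.fib_add_two]
      omega
  exact fun n => (key n).1

lemma key_list (m : ℕ) (S : Finset (Fin (m + 3))) :
    List.ofFn (fun i : Fin (m + 3) => decide (i ∈ S)) ∈ clist (m + 3) ↔
      ∀ v : Fin (m + 3), ¬(v ∈ S ∧ v + 1 ∈ S) := by
  classical
  set f : Fin (m + 3) → Bool := fun i => decide (i ∈ S) with hfdef
  have hlen : (List.ofFn f).length = m + 3 := List.length_ofFn (f := f)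
  have hget : ∀ (i : ℕ) (h : i < (List.ofFn f).length) (h' : i < m + 3),
      (List.ofFn f).get ⟨i, h⟩ = f ⟨i, h'⟩ := by
    intro i h h'
    rw [List.get_ofFn]
    congr 1
  have hmem : ∀ (i : ℕ) (h' : i < m + 3), (f ⟨i, h'⟩ = true) ↔ (⟨i, h'⟩ : Fin (m + 3)) ∈ S := by
    intro i h'
    simp [hfdef]
  have hhead : (List.ofFn f).head? = some (f ⟨0, by omega⟩) := by
    rw [List.head?_eq_getElem?, List.getElem?_eq_getElem (by omega), List.getElem_ofFn]
  have hlast : (List.ofFn f).getLast? = some (f ⟨m + 2, by omega⟩) := by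
    rw [List.getLast?_eq_getElem?, List.getElem?_eq_getElem (by rw [hlen]; omega),
      List.getElem_ofFn]
    congr 1
    apply congrArg
    apply Fin.ext
    simp [hlen]
  have hgood : good (List.ofFn f) ↔
      ∀ (i : ℕ) (h : i + 1 < m + 3), ¬((⟨i, by omega⟩ : Fin (m + 3)) ∈ S ∧ (⟨i + 1, h⟩ : Fin (m + 3)) ∈ S) := by
    show List.IsChain R (List.ofFn f) ↔ _
    rw [List.isChain_iff_getElem]
    have hget : ∀ (i : ℕ) (h : i < (List.ofFn f).length) (h' : i < m + 3),
        (List.ofFn f)[i]'h = f ⟨i, h'⟩ := hget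
    constructor
    · intro h i hi
      have := h i (by rw [hlen]; omega)
      rw [hget i (by omega) (by omega), hget (i+1) (by omega) (by omega)] at this
      unfold R at this
      rw [hmem, hmem] at this
      exact this
    · intro h i hi
      rw [hlen] at hi
      rw [hget i (by omega) (by omega), hget (i+1) (by omega) (by omega)]
      unfold R
      rw [hmem, hmem]
      exact h i (by omega)
  rw [clist, Finset.mem_filter, mem_glist, hhead, hlast, hgood]
  constructor
  · rintro ⟨⟨-, hchain⟩, hcyc⟩ v ⟨hv, hv1⟩
    by_cases hvm : v.val + 1 < m + 3
    · refine hchain v.val hvm ⟨?_, ?_⟩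
      · exact (by simpa using hv)
      · rw [← fin_succ_eq m v hvm]; exact hv1
    · have hlt := v.isLt
      have hveq : v = ⟨m + 2, by omega⟩ := Fin.ext (show v.val = m + 2 by omega)
      apply hcyc
      rw [Option.some_inj, Option.some_inj, hmem, hmem]
      rw [hveq] at hv hv1
      rw [fin_last_succ m] at hv1
      have h0 : (0 : Fin (m + 3)) = ⟨0, by omega⟩ := Fin.ext (Fin.val_zero _)
      rw [h0] at hv1
      exact ⟨hv1, hv⟩
  · intro h
    refine ⟨⟨hlen, ?_⟩, ?_⟩
    · intro i hi ⟨h1, h2⟩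
      refine h ⟨i, by omega⟩ ⟨h1, ?_⟩
      rw [fin_succ_eq m ⟨i, by omega⟩ (by simpa using hi)]
      exact h2
    · rintro ⟨h1, h2⟩
      rw [Option.some_inj, hmem] at h1
      rw [Option.some_inj, hmem] at h2
      refine h ⟨m + 2, by omega⟩ ⟨h2, ?_⟩
      rw [fin_last_succ m]
      have h0 : (0 : Fin (m + 3)) = ⟨0, by omega⟩ := Fin.ext (Fin.val_zero _)
      rw [h0]
      exact h1

theorem numIndepSets_cycleGraph (n : ℕ) (hn : 3 ≤ n) :
    numIndepSets (SimpleGraph.cycleGraph n) = lucasNum n := by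
  classical
  obtain ⟨m, rfl⟩ : ∃ m, n = m + 3 := ⟨n - 3, by omega⟩
  have h1 : numIndepSets (SimpleGraph.cycleGraph (m + 3)) = (clist (m + 3)).card := by
    unfold numIndepSets
    rw [Finset.powerset_univ]
    apply Finset.card_bij (fun S _ => List.ofFn (fun i : Fin (m + 3) => decide (i ∈ S)))
    · intro S hS
      simp only [Finset.mem_filter] at hS
      exact (key_list m S).2 ((indep_cond_iff m S).1 hS.2)
    · intro S hS T hT hST
      have h2 := List.ofFn_injective hST
      ext v
      have hv := congrFun h2 v
      simpa using hv
    · intro l hl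
      have hlen : l.length = m + 3 :=
        mem_allLists.1 (Finset.mem_filter.1 (Finset.mem_filter.1 hl).1).1
      set S : Finset (Fin (m + 3)) :=
        Finset.univ.filter (fun i : Fin (m + 3) => l.get ⟨i.val, by omega⟩ = true) with hSdef
      have hofn : List.ofFn (fun i : Fin (m + 3) => decide (i ∈ S)) = l := by
        apply List.ext_get (by simp [hlen])
        intro i hi1 hi2
        rw [List.get_ofFn]
        simp only [hSdef, Finset.mem_filter, Finset.mem_univ, true_and, decide_eq_true_eq]
        simp
      refine ⟨S, ?_, hofn⟩
      simp only [Finset.mem_filter]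
      refine ⟨Finset.mem_univ _, (indep_cond_iff m S).2 ((key_list m S).1 ?_)⟩
      rw [hofn]
      exact hl
  rw [h1, card_clist, show m + 3 = (m + 2) + 1 from rfl, lucas_fib (m + 2),
    show m + 2 + 2 = m + 4 from rfl]
  omega

end Main
end

section
/- For any n ≥ 3 and 1 ≤ t ≤ ⌊n/2⌋, the number of independent sets of size t in the cycle graph on n vertices equals (n/(n-t)) · C(n - t, t). -/
/-! Auxiliary: counting subsets of `range m` with no two consecutive elements. -/

private lemma mod_char_aux (s n : ℕ) (h : s < 2*n) (hn : 2 ≤ n) :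
    s % n = 1 ↔ s = 1 ∨ s = n+1 := by
  rcases Nat.lt_or_ge s n with hs | hs
  · rw [Nat.mod_eq_of_lt hs]
    constructor
    · intro h'; omega
    · intro h'; rcases h' with h'|h' <;> omega
  · rw [Nat.mod_eq_sub_mod hs, Nat.mod_eq_of_lt (show s - n < n by omega)]
    constructor
    · intro h'; omega
    · intro h'; rcases h' with h'|h' <;> omega

private lemma cycle_adj_val {n : ℕ} (hn : 3 ≤ n) {u v : Fin n} :
    (SimpleGraph.cycleGraph n).Adj u v ↔
      (u.val + 1 = v.val ∨ v.val + 1 = u.val ∨ (u.val = 0 ∧ v.val = n-1) ∨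
        (v.val = 0 ∧ u.val = n-1)) := by
  rw [SimpleGraph.cycleGraph_adj', Fin.sub_def, Fin.sub_def]
  simp only [Fin.val_mk]
  have h1 := u.isLt; have h2 := v.isLt
  rw [mod_char_aux _ n (by omega) (by omega), mod_char_aux _ n (by omega) (by omega)]
  constructor
  · rintro (h | h) <;> omega
  · rintro (h | h | ⟨h, h'⟩ | ⟨h, h'⟩) <;> omega

/-- Number of subsets of `{0, ..., m-1}` of size `t` with no two consecutive elements. -/
private def pc (m t : ℕ) : ℕ :=
  ((Finset.range m).powerset.filter fun S => (∀ i ∈ S, i + 1 ∉ S) ∧ S.card = t).card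

private lemma pc_zero_right (m : ℕ) : pc m 0 = 1 := by
  unfold pc
  rw [Finset.card_eq_one]
  refine ⟨∅, ?_⟩
  ext S
  simp only [Finset.mem_filter, Finset.mem_powerset, Finset.mem_singleton, Finset.card_eq_zero]
  constructor
  · rintro ⟨-, -, h⟩; exact h
  · rintro rfl; simp

private lemma pc_eq_zero {m t : ℕ} (h : m < t) : pc m t = 0 := by
  unfold pc
  rw [Finset.card_eq_zero]
  ext S
  simp only [Finset.mem_filter, Finset.mem_powerset, Finset.notMem_empty, iff_false]
  rintro ⟨hS, -, hc⟩
  have := Finset.card_le_card hS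
  simp [hc, Finset.card_range] at this
  omega

private lemma pc_succ_succ (m t : ℕ) : pc (m + 2) (t + 1) = pc (m + 1) (t + 1) + pc m t := by
  classical
  unfold pc
  rw [← Finset.card_filter_add_card_filter_not
    (s := (Finset.range (m + 2)).powerset.filter fun S => (∀ i ∈ S, i + 1 ∉ S) ∧ S.card = t + 1)
    (p := fun S => m + 1 ∉ S)]
  congr 1
  · congr 1
    ext S
    simp only [Finset.mem_filter, Finset.mem_powerset, Finset.subset_iff, Finset.mem_range]
    constructor
    · rintro ⟨⟨hsub, hP⟩, hm⟩
      refine ⟨fun {x} hx => ?_, hP⟩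
      have h1 := hsub hx
      have h2 : x ≠ m + 1 := fun h => hm (h ▸ hx)
      omega
    · rintro ⟨hsub, hP⟩
      exact ⟨⟨fun {x} hx => by have := hsub hx; omega, hP⟩,
        fun hm => by have := hsub hm; omega⟩
  · apply Finset.card_nbij' (fun S => S.erase (m + 1)) (fun T => insert (m + 1) T)
    · intro S hS
      simp only [Finset.mem_coe, Finset.mem_filter, Finset.mem_powerset, not_not] at hS
      obtain ⟨⟨hsub, hnc, hcard⟩, hm⟩ := hS
      simp only [Finset.mem_coe, Finset.mem_filter, Finset.mem_powerset]
      refine ⟨?_, ?_, ?_⟩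
      · intro x hx
        rw [Finset.mem_erase] at hx
        obtain ⟨hne, hxS⟩ := hx
        have h1 : x < m + 2 := Finset.mem_range.mp (hsub hxS)
        have h2 : x ≠ m := by
          rintro rfl
          exact hnc x hxS hm
        rw [Finset.mem_range]; omega
      · intro i hi
        rw [Finset.mem_erase] at hi ⊢
        intro h
        exact hnc i hi.2 h.2
      · rw [Finset.card_erase_of_mem hm, hcard]; omega
    · intro T hT
      simp only [Finset.mem_coe, Finset.mem_filter, Finset.mem_powerset] at hT
      obtain ⟨hsub, hnc, hcard⟩ := hT
      have hmT : m + 1 ∉ T := fun h => by have := Finset.mem_range.mp (hsub h); omega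
      simp only [Finset.mem_coe, Finset.mem_filter, Finset.mem_powerset, not_not]
      refine ⟨⟨?_, ?_, ?_⟩, Finset.mem_insert_self _ _⟩
      · intro x hx
        rcases Finset.mem_insert.mp hx with rfl | hx
        · rw [Finset.mem_range]; omega
        · have := Finset.mem_range.mp (hsub hx); rw [Finset.mem_range]; omega
      · intro i hi hi1
        rcases Finset.mem_insert.mp hi with rfl | hi
        · rcases Finset.mem_insert.mp hi1 with h | h
          · omega
          · have := Finset.mem_range.mp (hsub h); omega
        · rcases Finset.mem_insert.mp hi1 with h | h
          · have := Finset.mem_range.mp (hsub hi); omega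
          · exact hnc i hi h
      · rw [Finset.card_insert_of_notMem hmT, hcard]
    · intro S hS
      simp only [Finset.mem_coe, Finset.mem_filter, not_not] at hS
      exact Finset.insert_erase hS.2
    · intro T hT
      simp only [Finset.mem_coe, Finset.mem_filter, Finset.mem_powerset] at hT
      have hmT : m + 1 ∉ T := fun h => by have := Finset.mem_range.mp (hT.1 h); omega
      exact Finset.erase_insert hmT

private lemma pc_formula : ∀ m t : ℕ, pc m t = (m + 1 - t).choose t := by
  intro m
  induction m using Nat.strong_induction_on with
  | _ m ih =>
    intro t
    match m, t with
    | m, 0 => rw [pc_zero_right]; simp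
    | 0, t + 1 =>
      rw [pc_eq_zero (by omega)]
      rw [show 0 + 1 - (t + 1) = 0 by omega, Nat.choose_zero_succ]
    | 1, t + 1 =>
      match t with
      | 0 => rw [show pc 1 1 = 1 by decide]; decide
      | t + 1 =>
        rw [pc_eq_zero (by omega)]
        rw [show 1 + 1 - (t + 2) = 0 by omega, Nat.choose_zero_succ]
    | m + 2, t + 1 =>
      by_cases h : t ≤ m + 1
      · rw [pc_succ_succ, ih (m + 1) (by omega) (t + 1), ih m (by omega) t]
        rw [show m + 1 + 1 - (t + 1) = m + 1 - t by omega,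
          show m + 2 + 1 - (t + 1) = (m + 1 - t) + 1 by omega]
        rw [Nat.choose_succ_succ (m + 1 - t) t]
        simp only [Nat.succ_eq_add_one]
        omega
      · rw [pc_eq_zero (by omega)]
        rw [show m + 2 + 1 - (t + 1) = 0 by omega, Nat.choose_zero_succ]

private lemma cycle_count (n t : ℕ) (hn : 3 ≤ n) (ht : 1 ≤ t) :
    numIndepSetsOfSize (SimpleGraph.cycleGraph n) t = pc (n - 1) t + pc (n - 3) (t - 1) := by
  classical
  have hn0 : 0 < n := by omega
  unfold numIndepSetsOfSize
  rw [Finset.filter_congr_decidable]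
  rw [← Finset.card_filter_add_card_filter_not
    (s := Finset.univ.powerset.filter fun s : Finset (Fin n) =>
      (∀ v ∈ s, ∀ w ∈ s, ¬ (SimpleGraph.cycleGraph n).Adj v w) ∧ s.card = t)
    (p := fun S => (⟨0, hn0⟩ : Fin n) ∉ S)]
  congr 1
  · -- independent sets not containing vertex 0
    apply Finset.card_nbij' (fun S => S.image (fun v : Fin n => v.val - 1))
      (fun T => T.image (fun i : ℕ => (⟨(i + 1) % n, Nat.mod_lt _ hn0⟩ : Fin n)))
    · intro S hS
      simp only [Finset.mem_coe, Finset.mem_filter, Finset.mem_powerset, Finset.subset_univ, true_and] at hS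
      obtain ⟨⟨hind, hcard⟩, hz⟩ := hS
      have hpos : ∀ v ∈ S, 1 ≤ v.val := by
        intro v hv
        rcases Nat.eq_zero_or_pos v.val with h0 | h1
        · exfalso; apply hz; convert hv using 1; exact Fin.ext h0.symm
        · exact h1
      simp only [pc, Finset.mem_coe, Finset.mem_filter, Finset.mem_powerset]
      refine ⟨?_, ?_, ?_⟩
      · intro x hx
        obtain ⟨v, hv, rfl⟩ := Finset.mem_image.mp hx
        have := v.isLt; have := hpos v hv
        rw [Finset.mem_range]; omega
      · intro i hi hi1
        obtain ⟨a, ha, hai⟩ := Finset.mem_image.mp hi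
        obtain ⟨b, hb, hbi⟩ := Finset.mem_image.mp hi1
        have ha1 := hpos a ha; have hb1 := hpos b hb
        have hbn := b.isLt
        exact hind a ha b hb ((cycle_adj_val hn).mpr (Or.inl (by omega)))
      · rw [Finset.card_image_of_injOn, hcard]
        intro a ha b hb hab
        have := hpos a ha; have := hpos b hb
        exact Fin.ext (by simp only at hab; omega)
    · intro T hT
      simp only [pc, Finset.mem_coe, Finset.mem_filter, Finset.mem_powerset] at hT
      obtain ⟨hsub, hnc, hcard⟩ := hT
      have hlt : ∀ i ∈ T, i + 1 < n := fun i hi => by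
        have := Finset.mem_range.mp (hsub hi); omega
      have hval : ∀ i ∈ T, ((⟨(i + 1) % n, Nat.mod_lt _ hn0⟩ : Fin n)).val = i + 1 :=
        fun i hi => Nat.mod_eq_of_lt (hlt i hi)
      simp only [Finset.mem_coe, Finset.mem_filter, Finset.mem_powerset, Finset.subset_univ, true_and]
      refine ⟨⟨?_, ?_⟩, ?_⟩
      · intro u hu w hw hadj
        obtain ⟨i, hi, rfl⟩ := Finset.mem_image.mp hu
        obtain ⟨j, hj, rfl⟩ := Finset.mem_image.mp hw
        rcases (cycle_adj_val hn).mp hadj with h | h | ⟨h, h'⟩ | ⟨h, h'⟩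
        · rw [hval i hi, hval j hj] at h
          exact hnc i hi (by rw [show j = i + 1 by omega] at hj; exact hj)
        · rw [hval i hi, hval j hj] at h
          exact hnc j hj (by rw [show i = j + 1 by omega] at hi; exact hi)
        · rw [hval i hi] at h; omega
        · rw [hval j hj] at h; omega
      · rw [Finset.card_image_of_injOn, hcard]
        intro a ha b hb hab
        have h1 := hval a ha; have h2 := hval b hb
        simp only [Fin.val_mk] at h1 h2
        have h3 : ((⟨(a + 1) % n, Nat.mod_lt _ hn0⟩ : Fin n)) = ⟨(b + 1) % n, Nat.mod_lt _ hn0⟩ := hab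
        rw [Fin.mk.injEq] at h3
        omega
      · intro hmem
        obtain ⟨i, hi, hzi⟩ := Finset.mem_image.mp hmem
        have h1 := hval i hi
        simp only [Fin.val_mk] at h1
        rw [Fin.mk.injEq] at hzi
        omega
    · intro S hS
      simp only [Finset.mem_coe, Finset.mem_filter, Finset.mem_powerset, Finset.subset_univ, true_and] at hS
      obtain ⟨⟨hind, hcard⟩, hz⟩ := hS
      have hpos : ∀ v ∈ S, 1 ≤ v.val := by
        intro v hv
        rcases Nat.eq_zero_or_pos v.val with h0 | h1
        · exfalso; apply hz; convert hv using 1; exact Fin.ext h0.symm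
        · exact h1
      beta_reduce
      rw [Finset.image_image]
      rw [show S.image ((fun i : ℕ => (⟨(i + 1) % n, Nat.mod_lt _ hn0⟩ : Fin n)) ∘
            (fun v : Fin n => v.val - 1)) = S.image id from
        Finset.image_congr (fun v hv => by
          have h1 := hpos v hv
          have h2 := v.isLt
          apply Fin.ext
          simp only [Function.comp_apply, id_eq]
          rw [show v.val - 1 + 1 = v.val by omega, Nat.mod_eq_of_lt h2])]
      exact Finset.image_id
    · intro T hT
      simp only [pc, Finset.mem_coe, Finset.mem_filter, Finset.mem_powerset] at hT
      obtain ⟨hsub, hnc, hcard⟩ := hT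
      have hlt : ∀ i ∈ T, i + 1 < n := fun i hi => by
        have := Finset.mem_range.mp (hsub hi); omega
      beta_reduce
      rw [Finset.image_image]
      rw [show T.image ((fun v : Fin n => v.val - 1) ∘
            (fun i : ℕ => (⟨(i + 1) % n, Nat.mod_lt _ hn0⟩ : Fin n))) = T.image id from
        Finset.image_congr (fun i hi => by
          simp only [Function.comp_apply, id_eq]
          rw [Nat.mod_eq_of_lt (hlt i hi)]
          omega)]
      exact Finset.image_id
  · -- independent sets containing vertex 0
    apply Finset.card_nbij'
      (fun S => (S.erase ⟨0, hn0⟩).image (fun v : Fin n => v.val - 2))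
      (fun T => insert (⟨0, hn0⟩ : Fin n)
        (T.image (fun i : ℕ => (⟨(i + 2) % n, Nat.mod_lt _ hn0⟩ : Fin n))))
    · intro S hS
      simp only [Finset.mem_coe, Finset.mem_filter, Finset.mem_powerset, Finset.subset_univ, true_and,
        not_not] at hS
      obtain ⟨⟨hind, hcard⟩, hz⟩ := hS
      have hrange : ∀ v ∈ S.erase (⟨0, hn0⟩ : Fin n), 2 ≤ v.val ∧ v.val ≤ n - 2 := by
        intro v hv
        rw [Finset.mem_erase] at hv
        obtain ⟨hne, hvS⟩ := hv
        have hv0 : v.val ≠ 0 := fun h => hne (Fin.ext h)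
        have hvn := v.isLt
        constructor
        · rcases Nat.lt_or_ge v.val 2 with h | h
          · exfalso
            exact hind _ hz v hvS ((cycle_adj_val hn).mpr (Or.inl (by simp; omega)))
          · exact h
        · rcases Nat.lt_or_ge v.val (n - 1) with h | h
          · omega
          · exfalso
            exact hind _ hz v hvS ((cycle_adj_val hn).mpr (Or.inr (Or.inr (Or.inl
              ⟨by simp, by omega⟩))))
      simp only [pc, Finset.mem_coe, Finset.mem_filter, Finset.mem_powerset]
      refine ⟨?_, ?_, ?_⟩
      · intro x hx
        obtain ⟨v, hv, rfl⟩ := Finset.mem_image.mp hx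
        have := hrange v hv
        rw [Finset.mem_range]; omega
      · intro i hi hi1
        obtain ⟨a, ha, hai⟩ := Finset.mem_image.mp hi
        obtain ⟨b, hb, hbi⟩ := Finset.mem_image.mp hi1
        have h1 := hrange a ha; have h2 := hrange b hb
        rw [Finset.mem_erase] at ha hb
        exact hind a ha.2 b hb.2 ((cycle_adj_val hn).mpr (Or.inl (by omega)))
      · rw [Finset.card_image_of_injOn, Finset.card_erase_of_mem hz, hcard]
        intro a ha b hb hab
        have := hrange a ha; have := hrange b hb
        exact Fin.ext (by simp only at hab; omega)
    · intro T hT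
      simp only [pc, Finset.mem_coe, Finset.mem_filter, Finset.mem_powerset] at hT
      obtain ⟨hsub, hnc, hcard⟩ := hT
      have hlt : ∀ i ∈ T, i + 2 < n - 1 := fun i hi => by
        have := Finset.mem_range.mp (hsub hi); omega
      have hval : ∀ i ∈ T, ((⟨(i + 2) % n, Nat.mod_lt _ hn0⟩ : Fin n)).val = i + 2 :=
        fun i hi => Nat.mod_eq_of_lt (by have := hlt i hi; omega)
      have hznotim : (⟨0, hn0⟩ : Fin n) ∉
          T.image (fun i : ℕ => (⟨(i + 2) % n, Nat.mod_lt _ hn0⟩ : Fin n)) := by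
        intro hmem
        obtain ⟨i, hi, hzi⟩ := Finset.mem_image.mp hmem
        have h1 := hval i hi
        simp only [Fin.val_mk] at h1
        rw [Fin.mk.injEq] at hzi
        have := hlt i hi
        omega
      simp only [Finset.mem_coe, Finset.mem_filter, Finset.mem_powerset, Finset.subset_univ, true_and,
        not_not]
      refine ⟨⟨?_, ?_⟩, Finset.mem_insert_self _ _⟩
      · intro u hu w hw hadj
        rcases Finset.mem_insert.mp hu with rfl | hu <;>
          rcases Finset.mem_insert.mp hw with rfl | hw
        · exact (SimpleGraph.irrefl _) hadj
        · obtain ⟨j, hj, rfl⟩ := Finset.mem_image.mp hw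
          have h2 := hval j hj
          have h3 := hlt j hj
          rcases (cycle_adj_val hn).mp hadj with h | h | ⟨h, h'⟩ | ⟨h, h'⟩ <;>
            simp only [h2] at * <;> simp at * <;> omega
        · obtain ⟨j, hj, rfl⟩ := Finset.mem_image.mp hu
          have h2 := hval j hj
          have h3 := hlt j hj
          rcases (cycle_adj_val hn).mp hadj with h | h | ⟨h, h'⟩ | ⟨h, h'⟩ <;>
            simp only [h2] at * <;> simp at * <;> omega
        · obtain ⟨i, hi, rfl⟩ := Finset.mem_image.mp hu
          obtain ⟨j, hj, rfl⟩ := Finset.mem_image.mp hw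
          have h1 := hval i hi; have h2 := hval j hj
          have h3 := hlt i hi; have h4 := hlt j hj
          rcases (cycle_adj_val hn).mp hadj with h | h | ⟨h, h'⟩ | ⟨h, h'⟩
          · rw [h1, h2] at h
            exact hnc i hi (by rw [show j = i + 1 by omega] at hj; exact hj)
          · rw [h1, h2] at h
            exact hnc j hj (by rw [show i = j + 1 by omega] at hi; exact hi)
          · rw [h1] at h; omega
          · rw [h2] at h; omega
      · rw [Finset.card_insert_of_notMem hznotim, Finset.card_image_of_injOn, hcard]
        · omega
        · intro a ha b hb hab
          have h1 := hval a ha; have h2 := hval b hb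
          simp only [Fin.val_mk] at h1 h2
          have h3 : ((⟨(a + 2) % n, Nat.mod_lt _ hn0⟩ : Fin n)) = ⟨(b + 2) % n, Nat.mod_lt _ hn0⟩ := hab
          rw [Fin.mk.injEq] at h3
          omega
    · intro S hS
      simp only [Finset.mem_coe, Finset.mem_filter, Finset.mem_powerset, Finset.subset_univ, true_and,
        not_not] at hS
      obtain ⟨⟨hind, hcard⟩, hz⟩ := hS
      have hrange : ∀ v ∈ S.erase (⟨0, hn0⟩ : Fin n), 2 ≤ v.val := by
        intro v hv
        rw [Finset.mem_erase] at hv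
        obtain ⟨hne, hvS⟩ := hv
        have hv0 : v.val ≠ 0 := fun h => hne (Fin.ext h)
        rcases Nat.lt_or_ge v.val 2 with h | h
        · exfalso
          exact hind _ hz v hvS ((cycle_adj_val hn).mpr (Or.inl (by simp; omega)))
        · exact h
      beta_reduce
      rw [Finset.image_image]
      rw [show (S.erase ⟨0, hn0⟩).image
            ((fun i : ℕ => (⟨(i + 2) % n, Nat.mod_lt _ hn0⟩ : Fin n)) ∘
              (fun v : Fin n => v.val - 2)) = (S.erase ⟨0, hn0⟩).image id from
        Finset.image_congr (fun v hv => by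
          have h1 := hrange v hv
          have h2 := v.isLt
          apply Fin.ext
          simp only [Function.comp_apply, id_eq]
          rw [show v.val - 2 + 2 = v.val by omega, Nat.mod_eq_of_lt h2])]
      rw [Finset.image_id]
      exact Finset.insert_erase hz
    · intro T hT
      simp only [pc, Finset.mem_coe, Finset.mem_filter, Finset.mem_powerset] at hT
      obtain ⟨hsub, hnc, hcard⟩ := hT
      have hlt : ∀ i ∈ T, i + 2 < n - 1 := fun i hi => by
        have := Finset.mem_range.mp (hsub hi); omega
      have hval : ∀ i ∈ T, ((⟨(i + 2) % n, Nat.mod_lt _ hn0⟩ : Fin n)).val = i + 2 :=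
        fun i hi => Nat.mod_eq_of_lt (by have := hlt i hi; omega)
      have hznotim : (⟨0, hn0⟩ : Fin n) ∉
          T.image (fun i : ℕ => (⟨(i + 2) % n, Nat.mod_lt _ hn0⟩ : Fin n)) := by
        intro hmem
        obtain ⟨i, hi, hzi⟩ := Finset.mem_image.mp hmem
        have h1 := hval i hi
        simp only [Fin.val_mk] at h1
        rw [Fin.mk.injEq] at hzi
        have := hlt i hi
        omega
      beta_reduce
      rw [Finset.erase_insert hznotim, Finset.image_image]
      rw [show T.image ((fun v : Fin n => v.val - 2) ∘
            (fun i : ℕ => (⟨(i + 2) % n, Nat.mod_lt _ hn0⟩ : Fin n))) = T.image id from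
        Finset.image_congr (fun i hi => by
          simp only [Function.comp_apply, id_eq]
          rw [Nat.mod_eq_of_lt (by have := hlt i hi; omega)]
          omega)]
      exact Finset.image_id

private lemma choose_arith (n t : ℕ) (hn : 3 ≤ n) (ht1 : 1 ≤ t) (ht2 : t ≤ n / 2) :
    (n - t).choose t + (n - t - 1).choose (t - 1) = n * (n - t).choose t / (n - t) := by
  obtain ⟨m, hm⟩ : ∃ m, n - t = m + 1 := ⟨n - t - 1, by omega⟩
  obtain ⟨t', rfl⟩ : ∃ t', t = t' + 1 := ⟨t - 1, by omega⟩
  rw [hm, show m + 1 - 1 = m by omega, show t' + 1 - 1 = t' by omega]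
  have key := Nat.add_one_mul_choose_eq m t'
  set C := (m + 1).choose (t' + 1) with hC
  set C' := m.choose t' with hC'
  have hnC : n * C = (m + 1) * (C + C') := by
    have h2 : n = (m + 1) + (t' + 1) := by omega
    calc n * C = (m + 1) * C + (t' + 1) * C := by rw [h2]; ring
    _ = (m + 1) * C + (m + 1) * C' := by
        rw [show (t' + 1) * C = (m + 1) * C' from by
          rw [mul_comm (t' + 1) C, ← key]]
    _ = (m + 1) * (C + C') := by ring
  rw [hnC, Nat.mul_div_cancel_left _ (Nat.succ_pos m)]

theorem numIndepSetsOfSize_cycleGraph (n t : ℕ) (hn : 3 ≤ n) (ht1 : 1 ≤ t)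
    (ht2 : t ≤ n / 2) :
    numIndepSetsOfSize (SimpleGraph.cycleGraph n) t
      = n * (n - t).choose t / (n - t) := by
  rw [cycle_count n t hn ht1, pc_formula, pc_formula,
    show n - 1 + 1 - t = n - t by omega,
    show n - 3 + 1 - (t - 1) = n - t - 1 by omega]
  exact choose_arith n t hn ht1 ht2
end

section
/- For natural numbers n ≥ 3, a ≥ b ≥ 1, and any t ∈ ℕ, the number of independent sets in the chainsaw graph C(n, a, b) containing exactly t chain vertices equals i_t(C_n) · b^t · a^{n−2t}, where i_t(C_n) is the number of independent sets of size t in the n-cycle. -/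
/-- The chainsaw graph `C(m, a, b)`: an `m`-cycle of chain vertices `(v, 0)`,
with an `a`-clique attached at each chain vertex (the vertices `(v, i)`),
and each chain vertex `v` additionally joined to the `a - b` blade vertices
`(v+1, j)` with `1 ≤ j ≤ a - b` of the clique at `v + 1`. -/
def chainsawGraph (m a b : ℕ) : SimpleGraph (ZMod m × Fin a) :=
  SimpleGraph.fromRel (fun x y =>
    x.1 = y.1 ∨ (y.1 = x.1 + 1 ∧ x.2.val = 0 ∧ y.2.val ≤ a - b))

/-- The broken chainsaw graph `P(n, a, b)`: the chainsaw graph `C(n+1, a, b)`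
with chain vertex `0` (and all incident edges) deleted. -/
def brokenChainsawGraph (n a b : ℕ) :
    SimpleGraph ({x : ZMod (n + 1) × Fin a | ¬(x.1 = 0 ∧ x.2.val = 0)} : Set _) :=
  (chainsawGraph (n + 1) a b).induce _


open Finset

set_option linter.unusedSectionVars false

lemma fin_card_filter_lt_val (a c : ℕ) (hc : c < a) :
    (Finset.univ.filter (fun j : Fin a => c < j.val)).card = a - 1 - c := by
  have h : (Finset.univ.filter (fun j : Fin a => c < j.val)) = Finset.Ioi ⟨c, hc⟩ := by
    ext j; simp [Fin.lt_def]
  rw [h, Fin.card_Ioi]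

lemma cycle_indep_count (n t : ℕ) [NeZero n] (hn : 3 ≤ n) :
    numIndepSetsOfSize (SimpleGraph.cycleGraph n) t
      = (Finset.univ.filter (fun T : Finset (ZMod n) =>
          (∀ v ∈ T, v + 1 ∉ T) ∧ T.card = t)).card := by
  classical
  set f : Fin n → ZMod n := fun j => (j.val : ZMod n) with hf
  set g : ZMod n → Fin n := fun x => ⟨x.val, ZMod.val_lt x⟩ with hg
  have hfg : ∀ x, f (g x) = x := fun x => ZMod.natCast_rightInverse x
  have hgf : ∀ j, g (f j) = j := by
    intro j; apply Fin.ext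
    simp only [hf, hg, ZMod.val_cast_of_lt j.isLt]
  have hfinj : Function.Injective f := fun x y h => by rw [← hgf x, ← hgf y, h]
  have hginj : Function.Injective g := fun x y h => by rw [← hfg x, ← hfg y, h]
  have hone : (1 : Fin n).val = 1 := by
    rw [Fin.val_one']; exact Nat.mod_eq_of_lt (by omega)
  have hf1 : ∀ j : Fin n, f (j + 1) = f j + 1 := by
    intro j
    show (((j + 1 : Fin n)).val : ZMod n) = (j.val : ZMod n) + 1
    rw [Fin.add_def]
    simp only [hone]
    rw [ZMod.natCast_mod, Nat.cast_add, Nat.cast_one]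
  have hadj : ∀ u w : Fin n, (SimpleGraph.cycleGraph n).Adj u w ↔ (u = w + 1 ∨ w = u + 1) := by
    have h1 : ∀ x y : Fin n, (x - y).val = 1 ↔ x = y + 1 := by
      intro x y
      constructor
      · intro h
        have h2 : x - y = 1 := Fin.ext (by rw [h, hone])
        rw [sub_eq_iff_eq_add] at h2
        rw [h2, add_comm]
      · rintro rfl
        rw [add_sub_cancel_left, hone]
    intro u w
    rw [SimpleGraph.cycleGraph_adj', h1, h1]
  unfold numIndepSetsOfSize
  rw [Finset.powerset_univ]
  apply Finset.card_bij (fun s _ => s.image f)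
  · intro s hs
    simp only [mem_filter, mem_univ, true_and] at hs ⊢
    obtain ⟨hind, hcard⟩ := hs
    refine ⟨?_, by rw [card_image_of_injective _ hfinj, hcard]⟩
    intro v hv hv1
    simp only [mem_image] at hv hv1
    obtain ⟨x, hx, rfl⟩ := hv
    obtain ⟨y, hy, hyx⟩ := hv1
    have hyx' : y = x + 1 := hfinj (by rw [hf1, hyx])
    exact hind x hx y hy ((hadj x y).2 (Or.inr hyx'))
  · intro s hs u hu h
    exact Finset.image_injective hfinj h
  · intro T hT
    refine ⟨T.image g, ?_, ?_⟩
    · simp only [mem_filter, mem_univ, true_and] at hT ⊢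
      obtain ⟨hind, hcard⟩ := hT
      refine ⟨?_, by rw [card_image_of_injective _ hginj, hcard]⟩
      intro x hx y hy hadjxy
      simp only [mem_image] at hx hy
      obtain ⟨u, hu, rfl⟩ := hx
      obtain ⟨w, hw, rfl⟩ := hy
      rcases (hadj _ _).1 hadjxy with h | h
      · have : u = w + 1 := by rw [← hfg u, h, hf1, hfg]
        exact hind w hw (this ▸ hu)
      · have : w = u + 1 := by rw [← hfg w, h, hf1, hfg]
        exact hind u hu (this ▸ hw)
    · rw [Finset.image_image]
      have : f ∘ g = id := funext hfg
      rw [this, Finset.image_id]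

namespace ChainsawProof

open Finset

variable {n a b : ℕ} [NeZero n]

open Classical in
noncomputable def dec (g : ZMod n → Option (Fin a)) : Finset (ZMod n × Fin a) :=
  Finset.univ.filter (fun x => g x.1 = some x.2)

open Classical in
noncomputable def cset [NeZero a] (g : ZMod n → Option (Fin a)) : Finset (ZMod n) :=
  Finset.univ.filter (fun v => g v = some 0)

open Classical in
noncomputable def enc (s : Finset (ZMod n × Fin a)) : ZMod n → Option (Fin a) :=
  fun v => if h : ∃ j, (v, j) ∈ s then some h.choose else none

def Q (n a b : ℕ) [NeZero a] (g : ZMod n → Option (Fin a)) : Prop :=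
  ∀ (v : ZMod n) (j : Fin a), g v = some 0 → g (v + 1) = some j → a - b < j.val

lemma mem_dec {g : ZMod n → Option (Fin a)} {x : ZMod n × Fin a} :
    x ∈ dec g ↔ g x.1 = some x.2 := by
  classical
  simp [dec]

lemma mem_cset [NeZero a] {g : ZMod n → Option (Fin a)} {v : ZMod n} :
    v ∈ cset g ↔ g v = some 0 := by
  classical
  simp [cset]

lemma enc_eq_some {s : Finset (ZMod n × Fin a)}
    (huniq : ∀ v (j k : Fin a), (v, j) ∈ s → (v, k) ∈ s → j = k) {v : ZMod n} {j : Fin a} :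
    enc s v = some j ↔ (v, j) ∈ s := by
  unfold enc
  split_ifs with h
  · constructor
    · intro he
      rw [Option.some_inj] at he
      have hs := h.choose_spec
      rwa [he] at hs
    · intro hm
      exact congrArg some (huniq v _ _ h.choose_spec hm)
  · exact iff_of_false (by simp) (fun hm => h ⟨j, hm⟩)

lemma dec_enc {s : Finset (ZMod n × Fin a)}
    (huniq : ∀ v (j k : Fin a), (v, j) ∈ s → (v, k) ∈ s → j = k) :
    dec (enc s) = s := by
  ext ⟨v, j⟩
  rw [mem_dec, enc_eq_some huniq]

lemma enc_dec (g : ZMod n → Option (Fin a)) : enc (dec g) = g := by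
  have huniq : ∀ v (j k : Fin a), (v, j) ∈ dec g → (v, k) ∈ dec g → j = k := by
    intro v j k hj hk
    rw [mem_dec] at hj hk
    simp only at hj hk
    rw [hj] at hk
    exact Option.some_inj.mp hk
  funext v
  rcases hgv : g v with _ | j
  · unfold enc
    rw [dif_neg]
    rintro ⟨j, hj⟩
    rw [mem_dec] at hj
    simp only [hgv] at hj
    exact nomatch hj
  · exact (enc_eq_some huniq).mpr (mem_dec.mpr hgv)

lemma filter_chain_eq [NeZero a] (g : ZMod n → Option (Fin a)) :
    (dec g).filter (fun x => x.2.val = 0) = (cset g).image (fun v => (v, (0 : Fin a))) := by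
  classical
  ext ⟨v, j⟩
  simp only [mem_filter, mem_dec, mem_image, mem_cset, Prod.mk.injEq]
  constructor
  · rintro ⟨hm, hj⟩
    have hj0 : j = 0 := Fin.ext (by rw [hj, Fin.val_zero])
    subst hj0
    exact ⟨v, hm, rfl, rfl⟩
  · rintro ⟨u, hu, rfl, rfl⟩
    exact ⟨hu, Fin.val_zero a⟩

lemma chain_card [NeZero a] (g : ZMod n → Option (Fin a)) :
    ((dec g).filter (fun x => x.2.val = 0)).card = (cset g).card := by
  classical
  rw [filter_chain_eq, Finset.card_image_of_injective]
  intro u v h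
  exact (Prod.mk.injEq _ _ _ _).mp h |>.1

lemma one_ne_zero_zmod [NeZero n] (hn : 3 ≤ n) : (1 : ZMod n) ≠ 0 := by
  intro h
  haveI := ZMod.charP n
  rw [← Nat.cast_one] at h
  have hd := (CharP.cast_eq_zero_iff (ZMod n) n 1).1 h
  have := Nat.le_of_dvd one_pos hd
  omega

lemma ne_add_one [NeZero n] (hn : 3 ≤ n) (v : ZMod n) : v ≠ v + 1 := by
  intro h
  have h' : v + 0 = v + 1 := by rw [add_zero]; exact h
  exact one_ne_zero_zmod hn (add_left_cancel h').symm

open Classical in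
lemma step1 (n a b t : ℕ) [NeZero n] [NeZero a] (hn : 3 ≤ n) :
    (Finset.univ.powerset.filter fun s : Finset (ZMod n × Fin a) =>
        (∀ v ∈ s, ∀ w ∈ s, ¬ (chainsawGraph n a b).Adj v w) ∧
        (s.filter fun x => x.2.val = 0).card = t).card
    = (Finset.univ.filter (fun g : ZMod n → Option (Fin a) =>
        Q n a b g ∧ (cset g).card = t)).card := by
  classical
  rw [Finset.powerset_univ]
  refine Finset.card_bij' (fun s _ => enc s) (fun g _ => dec g) ?hi ?hj ?left ?right
  case hi =>
    intro s hs
    simp only [mem_filter, mem_univ, true_and] at hs ⊢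
    obtain ⟨hind, hcard⟩ := hs
    have huniq : ∀ v (j k : Fin a), (v, j) ∈ s → (v, k) ∈ s → j = k := by
      intro v j k hj hk
      by_contra hne
      apply hind _ hj _ hk
      rw [chainsawGraph, SimpleGraph.fromRel_adj]
      exact ⟨by simp [Prod.ext_iff, hne], Or.inl (Or.inl rfl)⟩
    constructor
    · intro v j hv hvj
      by_contra hle
      push_neg at hle
      rw [enc_eq_some huniq] at hv hvj
      apply hind _ hv _ hvj
      rw [chainsawGraph, SimpleGraph.fromRel_adj]
      refine ⟨?_, Or.inl (Or.inr ⟨rfl, Fin.val_zero a, hle⟩)⟩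
      simp only [ne_eq, Prod.mk.injEq, not_and]
      intro h
      exact absurd h (ne_add_one hn v)
    · rw [← chain_card (g := enc s), dec_enc huniq, hcard]
  case hj =>
    intro g hg
    simp only [mem_filter, mem_univ, true_and] at hg ⊢
    obtain ⟨hQg, hcard⟩ := hg
    constructor
    · rintro ⟨v, j⟩ hx ⟨w, k⟩ hy hadj
      rw [mem_dec] at hx hy
      rw [chainsawGraph, SimpleGraph.fromRel_adj] at hadj
      obtain ⟨hne, hrel⟩ := hadj
      rcases hrel with (h | ⟨h1, h2, h3⟩) | (h | ⟨h1, h2, h3⟩)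
      · -- v = w
        simp only at h
        subst h
        rw [hx] at hy
        have hjk : j = k := Option.some_inj.mp hy
        exact hne (by rw [hjk])
      · -- w = v + 1, j.val = 0, k.val ≤ a - b
        simp only at h1 h2 h3
        have hj0 : j = 0 := Fin.ext (by rw [h2, Fin.val_zero])
        subst hj0
        subst h1
        exact absurd (hQg v k hx hy) (by omega)
      · -- w = v (rel y x with y.1 = x.1)
        simp only at h
        subst h
        rw [hx] at hy
        have hjk : j = k := Option.some_inj.mp hy
        exact hne (by rw [hjk])
      · -- v = w + 1, k.val = 0, j.val ≤ a - b
        simp only at h1 h2 h3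
        have hk0 : k = 0 := Fin.ext (by rw [h2, Fin.val_zero])
        subst hk0
        subst h1
        exact absurd (hQg w j hy hx) (by omega)
    · rw [chain_card]
      exact hcard
  case left =>
    intro s hs
    simp only [mem_filter, mem_univ, true_and] at hs
    obtain ⟨hind, -⟩ := hs
    have huniq : ∀ v (j k : Fin a), (v, j) ∈ s → (v, k) ∈ s → j = k := by
      intro v j k hj hk
      by_contra hne
      apply hind _ hj _ hk
      rw [chainsawGraph, SimpleGraph.fromRel_adj]
      exact ⟨by simp [Prod.ext_iff, hne], Or.inl (Or.inl rfl)⟩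
    exact dec_enc huniq
  case right =>
    intro g _
    exact enc_dec g


open Classical in
lemma step2 (n a b t : ℕ) [NeZero n] [NeZero a] (hn : 3 ≤ n) (hb : 1 ≤ b) (hab : b ≤ a)
    (T : Finset (ZMod n)) (hind : ∀ v ∈ T, v + 1 ∉ T) (hcardT : T.card = t) :
    ((Finset.univ.filter (fun g : ZMod n → Option (Fin a) =>
        Q n a b g ∧ (cset g).card = t)).filter (fun g => cset g = T)).card
      = b ^ t * a ^ (n - 2 * t) := by
  classical
  have ha : 1 ≤ a := le_trans hb hab
  set A : ZMod n → Finset (Option (Fin a)) := fun v =>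
    if v ∈ T then {some 0}
    else if v - 1 ∈ T then insert none ((univ.filter (fun j : Fin a => a - b < j.val)).image some)
    else insert none ((univ.filter (fun j : Fin a => 0 < j.val)).image some) with hA
  have hset : ((Finset.univ.filter (fun g : ZMod n → Option (Fin a) =>
        Q n a b g ∧ (cset g).card = t)).filter (fun g => cset g = T))
      = Fintype.piFinset A := by
    ext g
    simp only [mem_filter, mem_univ, true_and, Fintype.mem_piFinset]
    constructor
    · rintro ⟨⟨hQg, _⟩, hcsetT⟩ v
      by_cases hvT : v ∈ T
      · simp only [hA, if_pos hvT, mem_singleton]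
        have hv : v ∈ cset g := hcsetT ▸ hvT
        rwa [mem_cset] at hv
      · by_cases hv1 : v - 1 ∈ T
        · simp only [hA, if_neg hvT, if_pos hv1, mem_insert, mem_image, mem_filter, mem_univ,
            true_and]
          rcases hgv : g v with _ | j
          · exact Or.inl rfl
          · right
            refine ⟨j, ?_, rfl⟩
            have hvm : g (v - 1) = some 0 := by
              have hv : v - 1 ∈ cset g := hcsetT ▸ hv1
              rwa [mem_cset] at hv
            exact hQg (v - 1) j hvm (by rw [sub_add_cancel]; exact hgv)
        · simp only [hA, if_neg hvT, if_neg hv1, mem_insert, mem_image, mem_filter, mem_univ,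
            true_and]
          rcases hgv : g v with _ | j
          · exact Or.inl rfl
          · right
            refine ⟨j, ?_, rfl⟩
            by_contra h0
            have hj0 : j = 0 := Fin.ext (by rw [Fin.val_zero]; omega)
            subst hj0
            have hv : v ∈ cset g := mem_cset.mpr hgv
            exact hvT (hcsetT ▸ hv)
    · intro hAg
      have hcs : cset g = T := by
        ext v
        rw [mem_cset]
        by_cases hvT : v ∈ T
        · have hv := hAg v
          simp only [hA, if_pos hvT, mem_singleton] at hv
          simp [hv, hvT]
        · simp only [hvT, iff_false]
          intro hgv
          have hv := hAg v
          simp only [hA, if_neg hvT] at hv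
          split_ifs at hv with h1 <;>
          · simp only [hgv, mem_insert, mem_image, mem_filter, mem_univ, true_and] at hv
            rcases hv with h | ⟨k, hk, hk2⟩
            · exact nomatch h
            · rw [Option.some_inj] at hk2
              subst hk2
              rw [Fin.val_zero] at hk
              omega
      refine ⟨⟨?_, by rw [hcs, hcardT]⟩, hcs⟩
      intro v j hv hvj
      have hvT : v ∈ T := by rw [← hcs, mem_cset]; exact hv
      have h1 : v + 1 ∉ T := hind v hvT
      have h2 : (v + 1) - 1 ∈ T := by rw [add_sub_cancel_right]; exact hvT
      have hv1 := hAg (v + 1)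
      simp only [hA, if_neg h1, if_pos h2, hvj, mem_insert, mem_image, mem_filter, mem_univ,
        true_and] at hv1
      rcases hv1 with h | ⟨k, hk, hk2⟩
      · exact nomatch h
      · rw [Option.some_inj] at hk2
        subst hk2
        exact hk
  rw [hset, Fintype.card_piFinset]
  have hAcard : ∀ v : ZMod n,
      (A v).card = if v ∈ T then 1 else if v - 1 ∈ T then b else a := by
    intro v
    by_cases hvT : v ∈ T
    · simp [hA, hvT]
    · by_cases hv1 : v - 1 ∈ T
      · simp only [hA, if_neg hvT, if_pos hv1]
        rw [card_insert_of_notMem (by simp),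
          Finset.card_image_of_injective _ (Option.some_injective _),
          fin_card_filter_lt_val a (a - b) (by omega)]
        omega
      · simp only [hA, if_neg hvT, if_neg hv1]
        rw [card_insert_of_notMem (by simp),
          Finset.card_image_of_injective _ (Option.some_injective _),
          fin_card_filter_lt_val a 0 (by omega)]
        omega
  rw [Finset.prod_congr rfl (fun v _ => hAcard v)]
  -- now the product
  set T' : Finset (ZMod n) := T.image (fun v => v + 1) with hT'
  have hmemT' : ∀ v : ZMod n, v ∈ T' ↔ v - 1 ∈ T := by
    intro v
    simp only [hT', mem_image]
    constructor
    · rintro ⟨u, hu, rfl⟩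
      rwa [add_sub_cancel_right]
    · intro h
      exact ⟨v - 1, h, sub_add_cancel v 1⟩
  have hdisj : Disjoint T T' := by
    rw [Finset.disjoint_left]
    intro v hv hv'
    simp only [hT', mem_image] at hv'
    obtain ⟨u, hu, rfl⟩ := hv'
    exact hind u hu hv
  have hT'card : T'.card = t := by
    rw [hT', Finset.card_image_of_injective _ (add_left_injective 1), hcardT]
  have hprodeq : ∀ v : ZMod n,
      (if v ∈ T then 1 else if v - 1 ∈ T then b else a)
        = (if v ∈ T then 1 else if v ∈ T' then b else a) := by
    intro v
    by_cases hvT : v ∈ T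
    · simp [hvT]
    · rw [if_neg hvT, if_neg hvT]
      by_cases hv1 : v - 1 ∈ T
      · rw [if_pos hv1, if_pos ((hmemT' v).mpr hv1)]
      · rw [if_neg hv1, if_neg (fun h => hv1 ((hmemT' v).mp h))]
  rw [Finset.prod_congr rfl (fun v _ => hprodeq v)]
  have hsub : T ∪ T' ⊆ univ := subset_univ _
  rw [← Finset.prod_sdiff hsub]
  have hpart1 : (∏ v ∈ univ \ (T ∪ T'), (if v ∈ T then 1 else if v ∈ T' then b else a))
      = a ^ (n - 2 * t) := by
    rw [Finset.prod_congr rfl (fun v hv => ?_), Finset.prod_const]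
    · congr 1
      rw [card_sdiff_of_subset hsub, Finset.card_union_of_disjoint hdisj, hcardT, hT'card, card_univ,
        ZMod.card]
      omega
    · rw [mem_sdiff, mem_union] at hv
      push_neg at hv
      rw [if_neg hv.2.1, if_neg hv.2.2]
  have hpart2 : (∏ v ∈ T ∪ T', (if v ∈ T then 1 else if v ∈ T' then b else a)) = b ^ t := by
    rw [Finset.prod_union hdisj]
    have e1 : (∏ v ∈ T, (if v ∈ T then 1 else if v ∈ T' then b else a)) = 1 := by
      apply Finset.prod_eq_one
      intro v hv
      rw [if_pos hv]
    have e2 : (∏ v ∈ T', (if v ∈ T then 1 else if v ∈ T' then b else a)) = b ^ t := by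
      rw [Finset.prod_congr rfl (fun v hv => ?_), Finset.prod_const, hT'card]
      rw [if_neg (Finset.disjoint_right.mp hdisj hv), if_pos hv]
    rw [e1, e2, one_mul]
  rw [hpart1, hpart2, mul_comm]



end ChainsawProof

open Classical in
theorem chainsaw_indepSets_with_chain_count (n a b t : ℕ) [NeZero n] (hn : 3 ≤ n)
    (hb : 1 ≤ b) (hab : b ≤ a) :
    (Finset.univ.powerset.filter fun s : Finset (ZMod n × Fin a) =>
        (∀ v ∈ s, ∀ w ∈ s, ¬ (chainsawGraph n a b).Adj v w) ∧
        (s.filter fun x => x.2.val = 0).card = t).card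
      = numIndepSetsOfSize (SimpleGraph.cycleGraph n) t * b ^ t * a ^ (n - 2 * t) := by
  classical
  haveI : NeZero a := ⟨by omega⟩
  rw [ChainsawProof.step1 n a b t hn]
  have hfib : ∀ g ∈ (Finset.univ.filter (fun g : ZMod n → Option (Fin a) =>
        ChainsawProof.Q n a b g ∧ (ChainsawProof.cset g).card = t)),
      ChainsawProof.cset g ∈ (Finset.univ.filter (fun T : Finset (ZMod n) =>
        (∀ v ∈ T, v + 1 ∉ T) ∧ T.card = t)) := by
    intro g hg
    simp only [Finset.mem_filter, Finset.mem_univ, true_and] at hg ⊢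
    obtain ⟨hQg, hcard⟩ := hg
    refine ⟨?_, hcard⟩
    intro v hv hv1
    rw [ChainsawProof.mem_cset] at hv hv1
    have hlt := hQg v 0 hv hv1
    rw [Fin.val_zero] at hlt
    omega
  rw [Finset.card_eq_sum_card_fiberwise hfib]
  have hsum : ∀ T ∈ (Finset.univ.filter (fun T : Finset (ZMod n) =>
        (∀ v ∈ T, v + 1 ∉ T) ∧ T.card = t)),
      ((Finset.univ.filter (fun g : ZMod n → Option (Fin a) =>
        ChainsawProof.Q n a b g ∧ (ChainsawProof.cset g).card = t)).filter
          (fun g => ChainsawProof.cset g = T)).card = b ^ t * a ^ (n - 2 * t) := by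
    intro T hT
    simp only [Finset.mem_filter, Finset.mem_univ, true_and] at hT
    exact ChainsawProof.step2 n a b t hn hb hab T hT.1 hT.2
  rw [Finset.sum_congr rfl hsum, Finset.sum_const, smul_eq_mul,
    cycle_indep_count n t hn, mul_assoc]
end
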